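/- Let n ≥ 5 and let r, r' be integers with 2 ≤ r < r' and 2r' - 1 ≤ n. Then in S_n the following exchange law holds: t_{2r'-1} · t_{2r-1} = ∏_{i=2}^{r} (t_{2i-1}^{-1} · u_{2i}) · t_{2r'-1}, where the product is taken over i = 2, 3, ..., r in increasing order. -/
import Mathlib


/- We work in the symmetric group on `Fin n` (representing `{1, ..., n}` via `i ↦ i - 1`).
The paper multiplies permutations left-to-right: `(π₁ · π₂)(i) = π₂(π₁(i))`,
while Mathlib's `*` on `Equiv.Perm` is function composition: `(π₁ * π₂)(i) = π₁(π₂(i))`.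
Hence a paper product `A · B · C` is rendered below as `C * B * A`. -/

/-- `sP n i` is the transposition `sᵢ = (i, i+1)` (1-indexed), for `1 ≤ i ≤ n - 1`. -/
def sP (n i : ℕ) : Equiv.Perm (Fin n) :=
  if h : 1 ≤ i ∧ i < n then
    Equiv.swap ⟨i - 1, lt_of_le_of_lt (Nat.sub_le i 1) h.2⟩ ⟨i, h.2⟩
  else 1

/-- `tP n m` is `t_m = s₁ · s₂ ⋯ s_{m-1}` (paper's left-to-right product, so here the
factor for larger index is multiplied on the left).  `tP n 0 = tP n 1 = 1`. -/
def tP (n m : ℕ) : Equiv.Perm (Fin n) :=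
  (List.range (m - 1)).foldl (fun g j => sP n (j + 1) * g) 1

/-- `uP n r` is `u_{2r} = t_{2r-2} · s_{2r-1}` (paper order; here reversed). -/
def uP (n r : ℕ) : Equiv.Perm (Fin n) := sP n (2 * r - 1) * tP n (2 * r - 2)

/-- `vP n r` is `v_{2r} = t_{2r}²`. -/
def vP (n r : ℕ) : Equiv.Perm (Fin n) := (tP n (2 * r)) ^ 2

/- ### Auxiliary lemmas -/

theorem sP_mul_self (n k : ℕ) : sP n k * sP n k = 1 := by
  unfold sP
  split
  · exact Equiv.swap_mul_self _ _
  · simp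

theorem sP_inv (n k : ℕ) : (sP n k)⁻¹ = sP n k :=
  inv_eq_of_mul_eq_one_right (sP_mul_self n k)

theorem tP_succ (n m : ℕ) : tP n (m + 1) = sP n m * tP n m := by
  cases m with
  | zero => simp [tP, sP]
  | succ m' => simp [tP, List.range_succ]

theorem sP_fix (n k : ℕ) (x : Fin n) (h1 : x.val ≠ k - 1) (h2 : x.val ≠ k) :
    sP n k x = x := by
  unfold sP
  split
  · exact Equiv.swap_apply_of_ne_of_ne (fun h => h1 (congrArg Fin.val h))
      (fun h => h2 (congrArg Fin.val h))
  · rfl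

theorem tP_fix (n : ℕ) : ∀ m (x : Fin n), m ≤ x.val → tP n m x = x := by
  intro m
  induction m with
  | zero => intro x _; rfl
  | succ m ih =>
    intro x hx
    rw [tP_succ, Equiv.Perm.mul_apply, ih x (by omega), sP_fix n m x (by omega) (by omega)]

theorem tP_apply (n : ℕ) : ∀ m (x : Fin n), 1 ≤ x.val → x.val < m →
    (tP n m x).val = x.val - 1 := by
  intro m
  induction m with
  | zero => intro x _ h; omega
  | succ m ih =>
    intro x h1 h2
    rw [tP_succ, Equiv.Perm.mul_apply]
    rcases Nat.lt_or_ge x.val m with hlt | hge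
    · have hv := ih x h1 hlt
      rw [sP_fix n m _ (by omega) (by omega), hv]
    · have hx : x.val = m := by omega
      rw [tP_fix n m x (by omega)]
      have hm1 : 1 ≤ m := by omega
      have hmn : m < n := by have := x.isLt; omega
      unfold sP
      rw [dif_pos ⟨hm1, hmn⟩]
      have : x = (⟨m, hmn⟩ : Fin n) := Fin.ext hx
      rw [this, Equiv.swap_apply_right]

/-- Key commutation: conjugating `s_k` through `t_m` shifts the index. -/
theorem sP_tP_comm (n k m : ℕ) (hk : 1 ≤ k) (hkm : k + 1 < m) (hmn : m ≤ n) :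
    sP n k * tP n m = tP n m * sP n (k + 1) := by
  have hkn : k < n := by omega
  have hk1n : k + 1 < n := by omega
  have e1 : tP n m ⟨k, hkn⟩ = ⟨k - 1, by omega⟩ := by
    apply Fin.ext
    rw [tP_apply n m ⟨k, hkn⟩ (by simpa using hk) (by simpa using by omega)]
  have e2 : tP n m ⟨k + 1, hk1n⟩ = ⟨k, hkn⟩ := by
    apply Fin.ext
    rw [tP_apply n m ⟨k + 1, hk1n⟩ (by simp) (by simpa using by omega)]
    simp
  have hs1 : sP n k = Equiv.swap (⟨k - 1, by omega⟩ : Fin n) ⟨k, hkn⟩ := by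
    unfold sP; rw [dif_pos ⟨hk, hkn⟩]
  have hs2 : sP n (k + 1) = Equiv.swap (⟨k, hkn⟩ : Fin n) ⟨k + 1, hk1n⟩ := by
    unfold sP; rw [dif_pos ⟨by omega, hk1n⟩]
    congr 1
  have key : sP n k = tP n m * sP n (k + 1) * (tP n m)⁻¹ := by
    rw [hs1, hs2]
    have h := Equiv.swap_apply_apply (tP n m) (⟨k, hkn⟩ : Fin n) ⟨k + 1, hk1n⟩
    rw [e1, e2] at h
    exact h
  rw [key]
  group

/- ### The main theorem -/

/-- for `2 ≤ r < r'` with `2r' - 1 ≤ n`,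
`t_{2r'-1} · t_{2r-1} = ∏_{i=2}^{r} (t_{2i-1}⁻¹ · u_{2i}) · t_{2r'-1}` (paper
left-to-right product over `i` increasing; rendered here in composition order, i.e.
everything reversed).  The index `j ∈ range (r-1)` corresponds to `i = j + 2`. -/
theorem tt_exchange (n r r' : ℕ) (hn : 5 ≤ n) (hr : 2 ≤ r) (hrr : r < r')
    (hrn : 2 * r' - 1 ≤ n) :
    tP n (2 * r - 1) * tP n (2 * r' - 1) =
      tP n (2 * r' - 1) *
        (List.range (r - 1)).foldl
          (fun acc j => uP n (j + 2) * (tP n (2 * (j + 2) - 1))⁻¹ * acc) 1 := by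
  set M := 2 * r' - 1 with hM
  -- Step 1: simplify the folding function
  have hfun : (fun (acc : Equiv.Perm (Fin n)) j =>
      uP n (j + 2) * (tP n (2 * (j + 2) - 1))⁻¹ * acc) =
      (fun acc j => sP n (2 * j + 3) * sP n (2 * j + 2) * acc) := by
    funext acc j
    have h1 : 2 * (j + 2) - 1 = 2 * j + 3 := by omega
    have h2 : 2 * (j + 2) - 2 = 2 * j + 2 := by omega
    have h3 : tP n (2 * j + 3) = sP n (2 * j + 2) * tP n (2 * j + 2) :=
      tP_succ n (2 * j + 2)
    unfold uP
    rw [h1, h2, h3, mul_inv_rev, sP_inv]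
    group
  rw [hfun]
  -- Step 2: induction on r
  clear hfun
  induction r, hr using Nat.le_induction with
  | base =>
    -- r = 2
    have h2 : (2 : ℕ) * 2 - 1 = 3 := by norm_num
    rw [h2]
    have ht3 : tP n 3 = sP n 2 * (sP n 1 * tP n 1) := by
      rw [show (3 : ℕ) = 2 + 1 from rfl, tP_succ, show (2 : ℕ) = 1 + 1 from rfl, tP_succ]
    have ht1 : tP n 1 = 1 := by simp [tP]
    have hc1 : sP n 1 * tP n M = tP n M * sP n 2 :=
      sP_tP_comm n 1 M le_rfl (by omega) (by omega)
    have hc2 : sP n 2 * tP n M = tP n M * sP n 3 :=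
      sP_tP_comm n 2 M (by omega) (by omega) (by omega)
    rw [show (2:ℕ) - 1 = 1 from rfl, show List.range 1 = [0] from rfl,
      List.foldl_cons, List.foldl_nil]
    rw [ht3, ht1, mul_one]
    calc sP n 2 * sP n 1 * tP n M
        = sP n 2 * (sP n 1 * tP n M) := by simp only [mul_assoc]
      _ = sP n 2 * (tP n M * sP n 2) := by rw [hc1]
      _ = sP n 2 * tP n M * sP n 2 := by simp only [mul_assoc]
      _ = tP n M * sP n 3 * sP n 2 := by rw [hc2]
      _ = tP n M * (sP n (2 * 0 + 3) * (sP n (2 * 0 + 2) * 1)) := by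
          norm_num [mul_assoc]
  | succ ρ hρ ih =>
    have hρr' : ρ < r' := by omega
    have IH := ih hρr'
    -- decompose tP n (2*(ρ+1)-1)
    have e1 : 2 * (ρ + 1) - 1 = (2 * ρ) + 1 := by omega
    have e2 : 2 * ρ = (2 * ρ - 1) + 1 := by omega
    have ht : tP n (2 * (ρ + 1) - 1) =
        sP n (2 * ρ) * (sP n (2 * ρ - 1) * tP n (2 * ρ - 1)) := by
      rw [e1, tP_succ, e2, tP_succ, ← e2]
    -- decompose the fold
    have e3 : (ρ + 1) - 1 = (ρ - 1) + 1 := by omega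
    have hfold : (List.range ((ρ + 1) - 1)).foldl
        (fun (acc : Equiv.Perm (Fin n)) j => sP n (2 * j + 3) * sP n (2 * j + 2) * acc) 1 =
        sP n (2 * ρ + 1) * sP n (2 * ρ) *
          (List.range (ρ - 1)).foldl
            (fun acc j => sP n (2 * j + 3) * sP n (2 * j + 2) * acc) 1 := by
      rw [e3, List.range_succ, List.foldl_append, List.foldl_cons, List.foldl_nil,
        show 2 * (ρ - 1) + 3 = 2 * ρ + 1 from by omega,
        show 2 * (ρ - 1) + 2 = 2 * ρ from by omega]
    have hc1 : sP n (2 * ρ - 1) * tP n M = tP n M * sP n (2 * ρ) := by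
      have := sP_tP_comm n (2 * ρ - 1) M (by omega) (by omega) (by omega)
      rwa [show 2 * ρ - 1 + 1 = 2 * ρ from by omega] at this
    have hc2 : sP n (2 * ρ) * tP n M = tP n M * sP n (2 * ρ + 1) :=
      sP_tP_comm n (2 * ρ) M (by omega) (by omega) (by omega)
    rw [ht, hfold]
    set F := (List.range (ρ - 1)).foldl
      (fun (acc : Equiv.Perm (Fin n)) j => sP n (2 * j + 3) * sP n (2 * j + 2) * acc) 1
    calc sP n (2 * ρ) * (sP n (2 * ρ - 1) * tP n (2 * ρ - 1)) * tP n M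
        = sP n (2 * ρ) * sP n (2 * ρ - 1) * (tP n (2 * ρ - 1) * tP n M) := by
          simp only [mul_assoc]
      _ = sP n (2 * ρ) * sP n (2 * ρ - 1) * (tP n M * F) := by rw [IH]
      _ = sP n (2 * ρ) * (sP n (2 * ρ - 1) * tP n M) * F := by
          simp only [mul_assoc]
      _ = sP n (2 * ρ) * (tP n M * sP n (2 * ρ)) * F := by rw [hc1]
      _ = sP n (2 * ρ) * tP n M * (sP n (2 * ρ) * F) := by
          simp only [mul_assoc]
      _ = tP n M * sP n (2 * ρ + 1) * (sP n (2 * ρ) * F) := by rw [hc2]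
      _ = tP n M * (sP n (2 * ρ + 1) * sP n (2 * ρ) * F) := by
          simp only [mul_assoc]
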